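/- Fix c > 0 and δ > 0 with cδ ≤ 1/e and set a = cδ/2. If y is a positive solution of the delay initial value problem y'(t) + c·y(t−δ) = 0 for t ≥ δ, y = φ on [0,δ], with initial function φ ∈ Φ, then φ(δ) > 2a(I₁ − 2a·I₂)/(1 − 2a), where I₁ = (1/δ)∫₀^δ φ(t) dt and I₂ = (1/δ²)∫₀^δ ∫₀^t φ(s) ds dt. -/
import Mathlib


open MeasureTheory Set

/-- The class `Φ` of initial functions: continuous, strictly decreasing on `[0, δ]`,
with `φ(0) = 1` and `φ(δ) > 0`. -/
def MemPhi (δ : ℝ) (φ : ℝ → ℝ) : Prop :=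
  ContinuousOn φ (Set.Icc 0 δ) ∧ StrictAntiOn φ (Set.Icc 0 δ) ∧ φ 0 = 1 ∧ 0 < φ δ

/-- `y` is a solution on `[0, ∞)` of the delay initial value problem
`y'(t) + c y(t - δ) = 0` for `t ≥ δ`, with `y = φ` on `[0, δ]`. -/
def IsSolDDE (c δ : ℝ) (φ y : ℝ → ℝ) : Prop :=
  ContinuousOn y (Set.Ici 0) ∧ (∀ t ∈ Set.Icc 0 δ, y t = φ t) ∧
  ∀ t ∈ Set.Ici δ, HasDerivWithinAt y (-(c * y (t - δ))) (Set.Ici δ) t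

/-- Necessary condition: if `y` is a positive solution of the delay IVP with initial
function `φ ∈ Φ`, then `φ(δ) > 2a(I₁ - 2a I₂)/(1 - 2a)` where `a = cδ/2`. -/
theorem stmt10 (c δ : ℝ) (hc : 0 < c) (hδ : 0 < δ) (hcδ : c * δ ≤ 1 / Real.exp 1)
    (a : ℝ) (ha : a = c * δ / 2)
    (φ y : ℝ → ℝ) (hφ : MemPhi δ φ) (hy : IsSolDDE c δ φ y)
    (hpos : ∀ t : ℝ, 0 ≤ t → 0 < y t)
    (I₁ I₂ : ℝ)
    (hI₁ : I₁ = (1 / δ) * ∫ t in (0:ℝ)..δ, φ t)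
    (hI₂ : I₂ = (1 / δ ^ 2) * ∫ t in (0:ℝ)..δ, (∫ s in (0:ℝ)..t, φ s)) :
    2 * a * (I₁ - 2 * a * I₂) / (1 - 2 * a) < φ δ := by
  obtain ⟨Cy, heq, hder⟩ := hy
  obtain ⟨Cφ, -, -, -⟩ := hφ
  -- continuity of t ↦ y (t - δ) on sets of reals ≥ δ
  have hysub : ∀ u v : ℝ, δ ≤ u → ContinuousOn (fun t => -(c * y (t - δ))) (Icc u v) := by
    intro u v hu
    refine (ContinuousOn.mul continuousOn_const
      (Cy.comp (continuousOn_id.sub continuousOn_const) ?_)).neg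
    intro t ht
    have : (0:ℝ) ≤ t - δ := by
      have := ht.1; linarith
    simpa using this
  have hint : ∀ u v : ℝ, δ ≤ u → u ≤ v → IntervalIntegrable (fun t => -(c * y (t - δ)))
      MeasureTheory.volume u v := by
    intro u v hu h
    exact ((hysub u v hu).mono (by rw [uIcc_of_le h])).intervalIntegrable
  -- FTC: for δ ≤ u ≤ v, y v - y u = ∫_u^v -(c y (t-δ))
  have key : ∀ u v : ℝ, δ ≤ u → u ≤ v →
      (∫ t in u..v, -(c * y (t - δ))) = y v - y u := by
    intro u v hu huv
    refine intervalIntegral.integral_eq_sub_of_hasDeriv_right_of_le huv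
      (Cy.mono ?_) (fun t ht => ?_) (hint u v hu huv)
    · intro t ht
      have : (0:ℝ) ≤ t := le_trans (le_trans hδ.le hu) ht.1
      simpa using this
    · have htδ : δ < t := lt_of_le_of_lt hu ht.1
      exact ((hder t htδ.le).hasDerivAt (Ici_mem_nhds htδ)).hasDerivWithinAt
  have hyφδ : y δ = φ δ := heq δ ⟨hδ.le, le_rfl⟩
  set J : ℝ := ∫ t in (0:ℝ)..δ, φ t with hJ
  set K : ℝ := ∫ t in (0:ℝ)..δ, (∫ s in (0:ℝ)..t, φ s) with hK
  -- y = φ on relevant subintervals, integral equalities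
  have hφint : IntervalIntegrable φ MeasureTheory.volume 0 δ :=
    (Cφ.mono (by rw [uIcc_of_le hδ.le])).intervalIntegrable
  have hshift : ∀ v : ℝ, δ ≤ v → v ≤ 2 * δ →
      (∫ t in δ..v, y (t - δ)) = ∫ s in (0:ℝ)..(v - δ), φ s := by
    intro v hv hv2
    rw [intervalIntegral.integral_comp_sub_right (fun x => y x) δ, sub_self]
    refine intervalIntegral.integral_congr ?_
    intro s hs
    rw [uIcc_of_le (by linarith)] at hs
    exact heq s ⟨hs.1, by have := hs.2; linarith⟩
  -- value of y on [δ, 2δ]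
  have yval : ∀ v : ℝ, v ∈ Icc δ (2 * δ) →
      y v = φ δ - c * ∫ s in (0:ℝ)..(v - δ), φ s := by
    intro v hv
    have h1 := key δ v le_rfl hv.1
    have h2 : (∫ t in δ..v, -(c * y (t - δ))) = -(c * ∫ t in δ..v, y (t - δ)) := by
      rw [intervalIntegral.integral_neg, intervalIntegral.integral_const_mul]
    rw [h2, hshift v hv.1 hv.2, hyφδ] at h1
    linarith
  have hy2δ : y (2 * δ) = φ δ - c * J := by
    have h := yval (2 * δ) ⟨by linarith, le_rfl⟩
    have h2 : 2 * δ - δ = δ := by ring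
    rw [h, h2]
  -- ∫_δ^{2δ} y = δ φ(δ) - c K
  have hFcont : ContinuousOn (fun x => ∫ s in (0:ℝ)..x, φ s) (Icc 0 δ) := by
    have := intervalIntegral.continuousOn_primitive_interval (a := (0:ℝ)) (b := δ)
      (f := φ) (μ := MeasureTheory.volume) ?_
    · rwa [uIcc_of_le hδ.le] at this
    · rw [uIcc_of_le hδ.le]; exact Cφ.integrableOn_compact isCompact_Icc
  have hintmid : (∫ t in δ..(2 * δ), y t) = δ * φ δ - c * K := by
    have hcongr : (∫ t in δ..(2 * δ), y t)
        = ∫ t in δ..(2 * δ), (φ δ - c * ∫ s in (0:ℝ)..(t - δ), φ s) := by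
      refine intervalIntegral.integral_congr ?_
      intro t ht
      rw [uIcc_of_le (by linarith)] at ht
      exact yval t ht
    have hGcont : ContinuousOn (fun t => c * ∫ s in (0:ℝ)..(t - δ), φ s)
        (Icc δ (2 * δ)) := by
      refine continuousOn_const.mul (hFcont.comp (continuousOn_id.sub continuousOn_const) ?_)
      intro t ht
      constructor
      · have := ht.1; simp; linarith
      · have := ht.2; simp; linarith
    have hGint : IntervalIntegrable (fun t => c * ∫ s in (0:ℝ)..(t - δ), φ s)
        MeasureTheory.volume δ (2 * δ) :=
      (hGcont.mono (by rw [uIcc_of_le (by linarith)])).intervalIntegrable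
    rw [hcongr, intervalIntegral.integral_sub (intervalIntegrable_const) hGint,
      intervalIntegral.integral_const, intervalIntegral.integral_const_mul,
      intervalIntegral.integral_comp_sub_right (fun x => ∫ s in (0:ℝ)..x, φ s) δ]
    have h2 : 2 * δ - δ = δ := by ring
    rw [sub_self, h2, ← hK]
    simp only [smul_eq_mul]
  -- y(3δ)
  have hy3δ : y (3 * δ) = φ δ - c * J - c * (δ * φ δ - c * K) := by
    have h1 := key (2 * δ) (3 * δ) (by linarith) (by linarith)
    have h2 : (∫ t in (2*δ)..(3*δ), -(c * y (t - δ)))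
        = -(c * ∫ t in (2*δ)..(3*δ), y (t - δ)) := by
      rw [intervalIntegral.integral_neg, intervalIntegral.integral_const_mul]
    have h3 : (∫ t in (2*δ)..(3*δ), y (t - δ)) = ∫ t in δ..(2*δ), y t := by
      rw [intervalIntegral.integral_comp_sub_right (fun x => y x) δ]
      norm_num
      ring_nf
    rw [h2, h3, hintmid, hy2δ] at h1
    linarith
  -- positivity at 3δ
  have h3pos : 0 < y (3 * δ) := hpos (3 * δ) (by linarith)
  rw [hy3δ] at h3pos
  -- 1 - cδ > 0
  have hexp : (1:ℝ) < Real.exp 1 := by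
    have := Real.add_one_le_exp (1:ℝ); linarith
  have hcδ1 : c * δ < 1 := by
    calc c * δ ≤ 1 / Real.exp 1 := hcδ
    _ < 1 := by rw [div_lt_one (Real.exp_pos 1)]; exact hexp
  -- conclude
  have hI₁' : I₁ * δ = J := by rw [hI₁]; field_simp
  have hI₂' : I₂ * δ ^ 2 = K := by rw [hI₂]; field_simp
  have h2a : c * δ = 2 * a := by rw [ha]; ring
  have hcJ : c * J = 2 * a * I₁ := by rw [← hI₁', ← h2a]; ring
  have hcK : c * (c * K) = 2 * a * (2 * a * I₂) := by rw [← hI₂', ← h2a]; ring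
  have hcφ : c * δ * φ δ = 2 * a * φ δ := by rw [h2a]
  rw [div_lt_iff₀ (by rw [← h2a]; linarith)]
  nlinarith [h3pos, hcJ, hcK, hcφ]
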